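/- Suppose f: (0,∞) → (0,∞) is continuous, x ↦ f(x)/x is bounded on [1,∞), and there exist ε ∈ (0,1) and a decreasing function φ: (0,∞) → (0,∞) such that f(x)/(x^{1-ε} φ(x)) → 1 as x → ∞. Then with F(x) = ∫₁ˣ du/f(u), one has limsup_{x→∞} f(x) F(x)/x < ∞. -/

import Mathlib

open Filter Real Set

theorem stmt_5 (f φ : ℝ → ℝ) (ε : ℝ)
    (hf_cont : ContinuousOn f (Set.Ioi 0))
    (hf_pos : ∀ x ∈ Set.Ioi (0:ℝ), 0 < f x)
    (hbdd : ∃ K : ℝ, ∀ x ∈ Set.Ici (1:ℝ), f x / x ≤ K)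
    (hε : ε ∈ Set.Ioo (0:ℝ) 1)
    (hφ_pos : ∀ x ∈ Set.Ioi (0:ℝ), 0 < φ x)
    (hφ_dec : ∀ x y : ℝ, 0 < x → x ≤ y → φ y ≤ φ x)
    (hasym : Tendsto (fun x => f x / (x ^ (1 - ε) * φ x)) atTop (nhds 1))
    (F : ℝ → ℝ) (hF : ∀ x > (0:ℝ), F x = ∫ u in (1:ℝ)..x, 1 / f u) :
    Filter.IsBoundedUnder (· ≤ ·) atTop (fun x => f x * F x / x) := by
  obtain ⟨ε0, ε1⟩ := hε
  have hlow := hasym.eventually (eventually_ge_nhds (by norm_num : (1:ℝ)/2 < 1))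
  have hhigh := hasym.eventually (eventually_le_nhds (by norm_num : (1:ℝ) < 2))
  obtain ⟨x₀, hx₀⟩ := eventually_atTop.1 (hlow.and hhigh)
  set x₁ : ℝ := max x₀ 1 with hx₁def
  have hx₁1 : (1:ℝ) ≤ x₁ := le_max_right _ _
  have hx₁0 : (0:ℝ) < x₁ := lt_of_lt_of_le one_pos hx₁1
  have hub : ∀ u, x₁ ≤ u →
      f u ≤ 2 * (u ^ (1-ε) * φ u) ∧ (1/2) * (u ^ (1-ε) * φ u) ≤ f u := by
    intro u hu
    have hu1 : (1:ℝ) ≤ u := le_trans hx₁1 hu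
    have hu0 : (0:ℝ) < u := lt_of_lt_of_le one_pos hu1
    have hD : 0 < u ^ (1-ε) * φ u := mul_pos (rpow_pos_of_pos hu0 _) (hφ_pos u hu0)
    have h := hx₀ u (le_trans (le_max_left _ _) hu)
    exact ⟨(div_le_iff₀ hD).1 h.2, (le_div_iff₀ hD).1 h.1⟩
  have hcontinv : ContinuousOn (fun u => 1 / f u) (Set.Ici (1:ℝ)) := by
    have hsub : Set.Ici (1:ℝ) ⊆ Set.Ioi 0 := fun y hy => Set.mem_Ioi.mpr (lt_of_lt_of_le one_pos (Set.mem_Ici.mp hy))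
    exact continuousOn_const.div (hf_cont.mono hsub) (fun y hy => (hf_pos y (hsub hy)).ne')
  have hint : ∀ a b : ℝ, 1 ≤ a → a ≤ b →
      IntervalIntegrable (fun u => 1 / f u) MeasureTheory.volume a b := by
    intro a b ha hab
    apply (hcontinv.mono ?_).intervalIntegrable
    rw [Set.uIcc_of_le hab]
    exact fun y hy => le_trans ha hy.1
  have hFnn : ∀ x, x₁ ≤ x → 0 ≤ F x := by
    intro x hx
    have hx1 : (1:ℝ) ≤ x := le_trans hx₁1 hx
    rw [hF x (lt_of_lt_of_le one_pos hx1)]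
    apply intervalIntegral.integral_nonneg hx1
    intro u hu
    have := hf_pos u (lt_of_lt_of_le one_pos hu.1)
    positivity
  refine ⟨2 * F x₁ * φ x₁ + 4/ε, ?_⟩
  rw [eventually_map]
  filter_upwards [eventually_ge_atTop x₁] with x hx
  show f x * F x / x ≤ 2 * F x₁ * φ x₁ + 4/ε
  have hx1 : (1:ℝ) ≤ x := le_trans hx₁1 hx
  have hx0 : (0:ℝ) < x := lt_of_lt_of_le one_pos hx1
  have hφx : 0 < φ x := hφ_pos x hx0
  have hφx₁ : 0 < φ x₁ := hφ_pos x₁ hx₁0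
  have hA : 0 < x ^ (1-ε) := rpow_pos_of_pos hx0 _
  have hsplit : F x = F x₁ + ∫ u in x₁..x, 1 / f u := by
    rw [hF x hx0, hF x₁ hx₁0,
      ← intervalIntegral.integral_add_adjacent_intervals (hint 1 x₁ le_rfl hx₁1)
        (hint x₁ x hx₁1 hx)]
  have hptwise : ∀ u ∈ Set.Icc x₁ x, 1 / f u ≤ (2/φ x) * u ^ (ε-1) := by
    intro u hu
    have hu1 : (1:ℝ) ≤ u := le_trans hx₁1 hu.1
    have hu0 : (0:ℝ) < u := lt_of_lt_of_le one_pos hu1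
    have hAu : 0 < u ^ (1-ε) := rpow_pos_of_pos hu0 _
    have hφu : φ x ≤ φ u := hφ_dec u x hu0 hu.2
    have hlb : (1/2) * (u ^ (1-ε) * φ x) ≤ f u := by
      have h := (hub u hu.1).2
      nlinarith [hAu]
    have hfu : 0 < f u := hf_pos u hu0
    have h2 : 1 / f u ≤ 1 / ((1/2) * (u ^ (1-ε) * φ x)) :=
      one_div_le_one_div_of_le (by positivity) hlb
    calc 1 / f u ≤ 1 / ((1/2) * (u ^ (1-ε) * φ x)) := h2
      _ = (2/φ x) * u ^ (ε-1) := by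
          rw [show ε - 1 = -(1-ε) by ring, rpow_neg hu0.le]
          field_simp
  have h2int : IntervalIntegrable (fun u => (2/φ x) * u ^ (ε-1))
      MeasureTheory.volume x₁ x := by
    apply ContinuousOn.intervalIntegrable
    apply ContinuousOn.mul continuousOn_const
    apply ContinuousOn.rpow_const continuousOn_id
    intro y hy
    rw [Set.uIcc_of_le hx] at hy
    exact Or.inl (ne_of_gt (lt_of_lt_of_le hx₁0 hy.1))
  have hIbound : (∫ u in x₁..x, 1 / f u) ≤ (2/φ x) * ((x ^ ε - x₁ ^ ε)/ε) := by
    calc (∫ u in x₁..x, 1 / f u) ≤ ∫ u in x₁..x, (2/φ x) * u ^ (ε-1) :=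
          intervalIntegral.integral_mono_on hx (hint x₁ x hx₁1 hx) h2int hptwise
      _ = (2/φ x) * ((x ^ ε - x₁ ^ ε)/ε) := by
          rw [intervalIntegral.integral_const_mul,
            integral_rpow (Or.inl (by linarith : (-1:ℝ) < ε - 1))]
          rw [show ε - 1 + 1 = ε by ring]
  have hFx : F x ≤ F x₁ + (2/φ x) * ((x ^ ε - x₁ ^ ε)/ε) := by
    rw [hsplit]; linarith
  have hfx : f x ≤ 2 * (x ^ (1-ε) * φ x) := (hub x hx).1
  have hC : 0 ≤ F x₁ := hFnn x₁ le_rfl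
  have hFxnn : 0 ≤ F x := hFnn x hx
  have hAx : x ^ (1-ε) * x ^ ε = x := by
    rw [← rpow_add hx0, show (1-ε)+ε = 1 by ring, rpow_one]
  have hAle : x ^ (1-ε) ≤ x := by
    calc x ^ (1-ε) ≤ x ^ (1:ℝ) := rpow_le_rpow_of_exponent_le hx1 (by linarith)
      _ = x := rpow_one x
  have hφle : φ x ≤ φ x₁ := hφ_dec x₁ x hx₁0 hx
  have hprod : f x * F x ≤ (2 * (x ^ (1-ε) * φ x)) * (F x₁ + (2/φ x) * ((x ^ ε - x₁ ^ ε)/ε)) := by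
    apply mul_le_mul hfx hFx hFxnn (by positivity)
  have hx₁ε : 0 < x₁ ^ ε := rpow_pos_of_pos hx₁0 ε
  have hexp : (2 * (x ^ (1-ε) * φ x)) * (F x₁ + (2/φ x) * ((x ^ ε - x₁ ^ ε)/ε))
      = 2 * F x₁ * (x ^ (1-ε) * φ x) + 4 * (x ^ (1-ε) * x ^ ε)/ε
        - 4 * (x ^ (1-ε) * x₁ ^ ε)/ε := by
    field_simp
    ring
  rw [hexp, hAx] at hprod
  have h1 : x ^ (1-ε) * φ x ≤ x * φ x₁ := mul_le_mul hAle hφle hφx.le (by linarith)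
  have h3 : 2 * F x₁ * (x ^ (1-ε) * φ x) ≤ 2 * F x₁ * (x * φ x₁) :=
    mul_le_mul_of_nonneg_left h1 (by linarith)
  have h2 : 0 ≤ 4 * (x ^ (1-ε) * x₁ ^ ε)/ε := by positivity
  have hfinal : f x * F x ≤ (2 * F x₁ * φ x₁ + 4/ε) * x := by
    have hr : (2 * F x₁ * φ x₁ + 4/ε) * x = 2 * F x₁ * (x * φ x₁) + 4 * x/ε := by ring
    rw [hr]
    linarith
  rw [div_le_iff₀ hx0]
  exact hfinal
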